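/- Fix α > 0 and δ > 0, and for a positive integer n set N = ⌊n^{1+α}⌋ and A = n^{-(1-α-δ)}. Consider the sum test T = 1{ X_{[N]×[N]} > N·n^δ/2 }, where X_{[N]×[N]} = Σ_{1≤i,j≤N} X_{ij}. Then P₀(T = 1) ≤ exp(−n^{2δ}/8) and sup_{θ ∈ Θ(A, n, N)} P_θ(T = 0) ≤ exp(−n^{2δ}/8); consequently Risk(T, A, n) ≤ 2·exp(−n^{2δ}/8). -/

import Mathlib

open MeasureTheory ProbabilityTheory Real Filter Topology
open scoped ENNReal NNReal

noncomputable section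

/-- Law of the N×N Gaussian observation matrix with mean matrix θ and unit variances. -/
def PTheta (N : ℕ) (θ : Fin N → Fin N → ℝ) : Measure (Fin N → Fin N → ℝ) :=
  Measure.pi fun i => Measure.pi fun j => gaussianReal (θ i j) 1

/-- Parameter space Θ(A, n, N). -/
def ThetaSet (A : ℝ) (n N : ℕ) : Set (Fin N → Fin N → ℝ) :=
  {θ | ∃ R C : Finset (Fin N), R.card = n ∧ C.card = n ∧
    (∀ i j, i ∈ R → j ∈ C → A ≤ θ i j) ∧
    (∀ i j, ¬(i ∈ R ∧ j ∈ C) → θ i j = 0)}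

/-- Risk of the test with rejection region `T`: type-I error plus worst-case type-II error. -/
def testRisk (n N : ℕ) (A : ℝ) (T : Set (Fin N → Fin N → ℝ)) : ℝ :=
  (PTheta N 0 T).toReal + ⨆ θ : ThetaSet A n N, (PTheta N θ.1 Tᶜ).toReal

/-- Minimax risk over all (measurable) tests. -/
def minimaxRisk (n N : ℕ) (A : ℝ) : ℝ :=
  ⨅ T : {T : Set (Fin N → Fin N → ℝ) // MeasurableSet T}, testRisk n N A T.1

/-- **Risk of the calibrated sum test in the dense above-boundary regime.**  Fix α > 0,
δ > 0; for a positive integer n put `N = ⌊n^{1+α}⌋`, `A = n^{−(1−α−δ)}`, and let T be the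
sum test rejecting when `Σ_{i,j} X_{ij} > N n^δ / 2`.  Then both the type-I error and the
worst-case type-II error are at most `exp(−n^{2δ}/8)`, whence
`Risk(T, A, n) ≤ 2 exp(−n^{2δ}/8)`. -/
lemma pdf_mul_exp (m lam x : ℝ) :
    gaussianPDFReal m 1 x * rexp (lam * x)
      = rexp (lam * m + lam ^ 2 / 2) * gaussianPDFReal (m + lam) 1 x := by
  simp only [gaussianPDFReal, NNReal.coe_one, mul_one]
  rw [mul_assoc, ← Real.exp_add, ← mul_assoc, mul_comm (rexp _), mul_assoc, ← Real.exp_add]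
  congr 1
  ring_nf

lemma integrable_exp_gauss (m lam : ℝ) :
    Integrable (fun x => rexp (lam * x)) (gaussianReal m 1) := by
  rw [gaussianReal_of_var_ne_zero _ one_ne_zero]
  have hmeas : Measurable fun x => (gaussianPDFReal m 1 x).toNNReal :=
    (measurable_gaussianPDFReal m 1).real_toNNReal
  have : (gaussianPDF m 1) = fun x => ((gaussianPDFReal m 1 x).toNNReal : ℝ≥0∞) := by
    ext x; simp [gaussianPDF, ENNReal.ofReal]
  rw [this, integrable_withDensity_iff_integrable_smul hmeas]
  have : (fun x => (gaussianPDFReal m 1 x).toNNReal • rexp (lam * x))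
      = fun x => rexp (lam * m + lam ^ 2 / 2) * gaussianPDFReal (m + lam) 1 x := by
    ext x
    rw [NNReal.smul_def, smul_eq_mul, Real.coe_toNNReal _ (gaussianPDFReal_nonneg m 1 x)]
    exact pdf_mul_exp m lam x
  rw [this]
  exact (integrable_gaussianPDFReal (m + lam) 1).const_mul _

lemma integral_exp_gauss (m lam : ℝ) :
    ∫ x, rexp (lam * x) ∂(gaussianReal m 1) = rexp (lam * m + lam ^ 2 / 2) := by
  rw [gaussianReal_of_var_ne_zero _ one_ne_zero]
  have hmeas : Measurable fun x => (gaussianPDFReal m 1 x).toNNReal :=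
    (measurable_gaussianPDFReal m 1).real_toNNReal
  have h : (gaussianPDF m 1) = fun x => ((gaussianPDFReal m 1 x).toNNReal : ℝ≥0∞) := by
    ext x; simp [gaussianPDF, ENNReal.ofReal]
  rw [h, integral_withDensity_eq_integral_smul hmeas]
  have h2 : (fun x => (gaussianPDFReal m 1 x).toNNReal • rexp (lam * x))
      = fun x => rexp (lam * m + lam ^ 2 / 2) * gaussianPDFReal (m + lam) 1 x := by
    ext x
    rw [NNReal.smul_def, smul_eq_mul, Real.coe_toNNReal _ (gaussianPDFReal_nonneg m 1 x)]
    exact pdf_mul_exp m lam x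
  rw [h2, integral_const_mul, integral_gaussianPDFReal_eq_one (m + lam) one_ne_zero, mul_one]

lemma my_integral_pi {ι : Type*} [Fintype ι] {E : ι → Type*} [m : ∀ i, MeasurableSpace (E i)]
    (μ : ∀ i, Measure (E i)) (hμ : ∀ i, SigmaFinite (μ i)) (f : ∀ i, E i → ℝ) :
    ∫ x : ∀ i, E i, ∏ i, f i (x i) ∂(Measure.pi μ) = ∏ i, ∫ x, f i x ∂(μ i) :=
  by haveI := hμ; exact MeasureTheory.integral_fintype_prod_eq_prod (𝕜 := ℝ) f (μ := μ)

lemma my_integrable_pi {ι : Type*} [Fintype ι] {E : ι → Type*} [m : ∀ i, MeasurableSpace (E i)]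
    (μ : ∀ i, Measure (E i)) (hμ : ∀ i, SigmaFinite (μ i)) {f : ∀ i, E i → ℝ}
    (hf : ∀ i, Integrable (f i) (μ i)) :
    Integrable (fun x : ∀ i, E i => ∏ i, f i (x i)) (Measure.pi μ) :=
  by haveI := hμ; exact MeasureTheory.Integrable.fintype_prod_dep (𝕜 := ℝ) (μ := μ) hf

lemma exp_sum_eq (N : ℕ) (lam : ℝ) (x : Fin N → Fin N → ℝ) :
    rexp (lam * ∑ i, ∑ j, x i j) = ∏ i, ∏ j, rexp (lam * x i j) := by
  rw [Finset.mul_sum]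
  rw [Real.exp_sum]
  congr 1; ext i
  rw [Finset.mul_sum, Real.exp_sum]

instance (N : ℕ) (θ : Fin N → Fin N → ℝ) : IsProbabilityMeasure (PTheta N θ) := by
  unfold PTheta; infer_instance

lemma integrable_exp_sum (N : ℕ) (θ : Fin N → Fin N → ℝ) (lam : ℝ) :
    Integrable (fun x => rexp (lam * ∑ i, ∑ j, x i j)) (PTheta N θ) := by
  have h : (fun x : Fin N → Fin N → ℝ => rexp (lam * ∑ i, ∑ j, x i j))
      = fun x => ∏ i, (fun _ : Fin N => fun r : Fin N → ℝ => ∏ j, rexp (lam * r j)) i (x i) := by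
    ext x; exact exp_sum_eq N lam x
  rw [h]
  unfold PTheta
  exact my_integrable_pi (fun i => Measure.pi fun j => gaussianReal (θ i j) 1)
    (fun i => inferInstance)
    (f := fun _ : Fin N => fun r : Fin N → ℝ => ∏ j, rexp (lam * r j))
    (fun i => my_integrable_pi (fun j => gaussianReal (θ i j) 1) (fun j => inferInstance)
      (f := fun _ : Fin N => fun y : ℝ => rexp (lam * y)) (fun j => integrable_exp_gauss _ _))

lemma integral_exp_sum (N : ℕ) (θ : Fin N → Fin N → ℝ) (lam : ℝ) :
    ∫ x, rexp (lam * ∑ i, ∑ j, x i j) ∂(PTheta N θ)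
      = rexp (lam * (∑ i, ∑ j, θ i j) + (N : ℝ)^2 * lam ^ 2 / 2) := by
  have h : (fun x : Fin N → Fin N → ℝ => rexp (lam * ∑ i, ∑ j, x i j))
      = fun x => ∏ i, (fun r : Fin N → ℝ => ∏ j, rexp (lam * r j)) (x i) := by
    ext x; exact exp_sum_eq N lam x
  rw [h]
  unfold PTheta
  rw [show (∫ x : Fin N → Fin N → ℝ, ∏ i, (fun r : Fin N → ℝ => ∏ j, rexp (lam * r j)) (x i)
      ∂(Measure.pi fun i => Measure.pi fun j => gaussianReal (θ i j) 1))
      = ∏ i, ∫ r : Fin N → ℝ, ∏ j, rexp (lam * r j)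
        ∂(Measure.pi fun j => gaussianReal (θ i j) 1) from
    my_integral_pi (fun i => Measure.pi fun j => gaussianReal (θ i j) 1)
      (fun i => inferInstance) (fun _ r => ∏ j, rexp (lam * r j))]
  have h2 : ∀ i, ∫ r : Fin N → ℝ, ∏ j, rexp (lam * r j)
      ∂(Measure.pi fun j => gaussianReal (θ i j) 1)
      = ∏ j, rexp (lam * θ i j + lam ^ 2 / 2) := by
    intro i
    rw [my_integral_pi (fun j => gaussianReal (θ i j) 1) (fun j => inferInstance)
      (fun j y => rexp (lam * y))]
    exact Finset.prod_congr rfl fun j _ => integral_exp_gauss _ _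
  simp_rw [h2, ← Real.exp_sum, Finset.sum_add_distrib, Finset.sum_const, Finset.card_univ,
    Fintype.card_fin, nsmul_eq_mul, ← Finset.mul_sum]
  congr 1
  ring

lemma chernoff {Ω : Type*} [MeasurableSpace Ω] (μ : Measure Ω) [IsProbabilityMeasure μ]
    {g : Ω → ℝ} (hg : Measurable g) (hInt : Integrable (fun x => rexp (g x)) μ) (c : ℝ) :
    (μ {x | c ≤ g x}).toReal ≤ rexp (-c) * ∫ x, rexp (g x) ∂μ := by
  set I := ∫ x, rexp (g x) ∂μ with hI
  have hI0 : 0 ≤ I := integral_nonneg fun x => (Real.exp_pos _).le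
  have hset : {x | ENNReal.ofReal (rexp c) ≤ ENNReal.ofReal (rexp (g x))} = {x | c ≤ g x} := by
    ext x
    simp [ENNReal.ofReal_le_ofReal_iff (Real.exp_pos (g x)).le, Real.exp_le_exp]
  have h1 : ENNReal.ofReal (rexp c) * μ {x | c ≤ g x}
      ≤ ∫⁻ x, ENNReal.ofReal (rexp (g x)) ∂μ := by
    rw [← hset]
    exact mul_meas_ge_le_lintegral₀ ((hg.exp).ennreal_ofReal.aemeasurable) _
  have h2 : ∫⁻ x, ENNReal.ofReal (rexp (g x)) ∂μ = ENNReal.ofReal I := by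
    rw [hI, ← ofReal_integral_eq_lintegral_ofReal hInt
      (Filter.Eventually.of_forall fun x => (Real.exp_pos _).le)]
  have h3 : μ {x | c ≤ g x} ≤ ENNReal.ofReal (rexp (-c) * I) := by
    calc μ {x | c ≤ g x}
        = ENNReal.ofReal (rexp (-c)) * (ENNReal.ofReal (rexp c) * μ {x | c ≤ g x}) := by
          rw [← mul_assoc, ← ENNReal.ofReal_mul (Real.exp_pos _).le, ← Real.exp_add]
          simp
      _ ≤ ENNReal.ofReal (rexp (-c)) * ENNReal.ofReal I := by
          exact mul_le_mul_right (h1.trans_eq h2) _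
      _ = ENNReal.ofReal (rexp (-c) * I) := by
          rw [← ENNReal.ofReal_mul (Real.exp_pos _).le]
  exact ENNReal.toReal_le_of_le_ofReal (by positivity) h3

lemma key_bound (N : ℕ) (θ : Fin N → Fin N → ℝ) (lam c : ℝ) :
    (PTheta N θ {x | c ≤ lam * ∑ i, ∑ j, x i j}).toReal
      ≤ rexp (-c + lam * (∑ i, ∑ j, θ i j) + (N : ℝ)^2 * lam ^ 2 / 2) := by
  have hS : Measurable (fun x : Fin N → Fin N → ℝ => ∑ i, ∑ j, x i j) := by
    refine Finset.measurable_sum _ fun i _ => Finset.measurable_sum _ fun j _ => ?_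
    exact (measurable_pi_apply j).comp (measurable_pi_apply i)
  have h := chernoff (PTheta N θ) (hS.const_mul lam)
    (by simpa [mul_assoc] using integrable_exp_sum N θ lam) c
  calc (PTheta N θ {x | c ≤ lam * ∑ i, ∑ j, x i j}).toReal
      ≤ rexp (-c) * ∫ x, rexp (lam * ∑ i, ∑ j, x i j) ∂(PTheta N θ) := h
    _ = rexp (-c + lam * (∑ i, ∑ j, θ i j) + (N : ℝ)^2 * lam ^ 2 / 2) := by
        rw [integral_exp_sum, ← Real.exp_add]; ring_nf


theorem sum_test_risk_dense (α δ : ℝ) (hα : 0 < α) (hδ : 0 < δ) (n N : ℕ) (hn : 0 < n)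
    (hN : N = ⌊(n : ℝ) ^ (1 + α)⌋₊) (A : ℝ) (hA : A = (n : ℝ) ^ (-(1 - α - δ)))
    (T : Set (Fin N → Fin N → ℝ))
    (hT : T = {x | (N : ℝ) * (n : ℝ) ^ δ / 2 < ∑ i, ∑ j, x i j}) :
    (PTheta N 0 T).toReal ≤ Real.exp (-(n : ℝ) ^ (2 * δ) / 8) ∧
    (⨆ θ : ThetaSet A n N, (PTheta N θ.1 Tᶜ).toReal) ≤ Real.exp (-(n : ℝ) ^ (2 * δ) / 8) ∧
    testRisk n N A T ≤ 2 * Real.exp (-(n : ℝ) ^ (2 * δ) / 8) := by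
  have hn0 : (0 : ℝ) < n := by exact_mod_cast hn
  have hn1 : (1 : ℝ) ≤ n := by exact_mod_cast hn
  have hNr : (N : ℝ) ≤ (n : ℝ) ^ (1 + α) := hN ▸ Nat.floor_le (by positivity)
  have hN1 : 1 ≤ N := by
    rw [hN]
    refine Nat.le_floor ?_
    rw [Nat.cast_one]
    calc (1 : ℝ) = 1 ^ (1 + α) := (Real.one_rpow _).symm
      _ ≤ (n : ℝ) ^ (1 + α) := Real.rpow_le_rpow zero_le_one hn1 (by linarith)
  have hNpos : (0 : ℝ) < N := by exact_mod_cast hN1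
  have hNne : (N : ℝ) ≠ 0 := ne_of_gt hNpos
  obtain ⟨e, he⟩ : ∃ e : ℝ, e = (n : ℝ) ^ δ := ⟨_, rfl⟩
  have he0 : 0 < e := he ▸ Real.rpow_pos_of_pos hn0 _
  have h2δ : e * e = (n : ℝ) ^ (2 * δ) := by
    rw [he, ← Real.rpow_add hn0, two_mul]
  obtain ⟨lam, hlam⟩ : ∃ lam : ℝ, lam = e / (2 * N) := ⟨_, rfl⟩
  have hlam0 : 0 < lam := by rw [hlam]; positivity
  obtain ⟨t, ht'⟩ : ∃ t : ℝ, t = (N : ℝ) * e / 2 := ⟨_, rfl⟩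
  -- Type I error
  have h1 : (PTheta N 0 T).toReal ≤ Real.exp (-(n : ℝ) ^ (2 * δ) / 8) := by
    have hsub : T ⊆ {x | lam * t ≤ lam * ∑ i, ∑ j, x i j} := by
      rw [hT]
      intro x hx
      simp only [Set.mem_setOf_eq] at hx ⊢
      rw [ht', he]
      exact mul_le_mul_of_nonneg_left (le_of_lt hx) hlam0.le
    calc (PTheta N 0 T).toReal
        ≤ (PTheta N 0 {x | lam * t ≤ lam * ∑ i, ∑ j, x i j}).toReal := by
          exact ENNReal.toReal_mono (measure_ne_top _ _) (measure_mono hsub)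
      _ ≤ rexp (-(lam * t) + lam * (∑ i : Fin N, ∑ j : Fin N, (0:ℝ))
            + (N : ℝ)^2 * lam ^ 2 / 2) := key_bound N 0 lam (lam * t)
      _ = Real.exp (-(n : ℝ) ^ (2 * δ) / 8) := by
          rw [← h2δ]
          congr 1
          simp only [Finset.sum_const_zero, mul_zero, add_zero]
          have h4 : lam * t = e * e / 4 := by rw [hlam, ht']; field_simp; ring
          have h8 : (N:ℝ)^2 * lam^2 / 2 = e * e / 8 := by rw [hlam]; field_simp; ring
          linear_combination h8 - h4
  -- Type II error
  have h2 : ∀ θ : ThetaSet A n N,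
      (PTheta N θ.1 Tᶜ).toReal ≤ Real.exp (-(n : ℝ) ^ (2 * δ) / 8) := by
    rintro ⟨θ, R, C, hR, hC, hge, hzero⟩
    have hmu : (N : ℝ) * e ≤ ∑ i, ∑ j, θ i j := by
      have hstep1 : ∀ i : Fin N, i ∈ R → ∑ j, θ i j = ∑ j ∈ C, θ i j := by
        intro i _
        exact (Finset.sum_subset (Finset.subset_univ C)
          (fun j _ hj => hzero i j (fun h => hj h.2))).symm
      have hstep0 : ∀ i : Fin N, i ∉ R → ∑ j, θ i j = 0 := by
        intro i hi
        exact Finset.sum_eq_zero fun j _ => hzero i j (fun h => hi h.1)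
      have hsum : ∑ i, ∑ j, θ i j = ∑ i ∈ R, ∑ j ∈ C, θ i j := by
        rw [← Finset.sum_subset (Finset.subset_univ R)
          (fun i _ hi => hstep0 i hi)]
        exact Finset.sum_congr rfl fun i hi => hstep1 i hi
      have hA0 : ∑ i ∈ R, ∑ j ∈ C, θ i j ≥ (n : ℝ) * ((n : ℝ) * A) := by
        calc ∑ i ∈ R, ∑ j ∈ C, θ i j
            ≥ ∑ i ∈ R, ∑ j ∈ C, A := by
              refine Finset.sum_le_sum fun i hi => Finset.sum_le_sum fun j hj => hge i j hi hj
          _ = (n : ℝ) * ((n : ℝ) * A) := by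
              simp [Finset.sum_const, hR, hC, nsmul_eq_mul, mul_comm]
      have hcomp : (N : ℝ) * e ≤ (n : ℝ) * ((n : ℝ) * A) := by
        have h1' : (n : ℝ) * ((n : ℝ) * A) = (n : ℝ) ^ ((1:ℝ) + α + δ) := by
          rw [hA]
          rw [show (n:ℝ) * ((n:ℝ) * (n:ℝ) ^ (-(1 - α - δ)))
              = (n:ℝ) ^ (1:ℝ) * ((n:ℝ) ^ (1:ℝ) * (n:ℝ) ^ (-(1 - α - δ))) by
            rw [Real.rpow_one]]
          rw [← Real.rpow_add hn0, ← Real.rpow_add hn0]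
          congr 1
          ring
        have h2' : (N : ℝ) * e ≤ (n : ℝ) ^ ((1:ℝ) + α + δ) := by
          calc (N : ℝ) * e ≤ (n : ℝ) ^ (1 + α) * e :=
              mul_le_mul_of_nonneg_right hNr he0.le
            _ = (n : ℝ) ^ ((1:ℝ) + α + δ) := by
              rw [he, ← Real.rpow_add hn0]
        linarith [h1' ▸ h2']
      linarith [hsum ▸ (hcomp.trans hA0)]
    have hsub : Tᶜ ⊆ {x | (-lam) * t ≤ (-lam) * ∑ i, ∑ j, x i j} := by
      rw [hT]
      intro x hx
      simp only [Set.mem_compl_iff, Set.mem_setOf_eq, not_lt] at hx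
      simp only [Set.mem_setOf_eq]
      rw [ht', he]
      exact mul_le_mul_of_nonpos_left hx (by linarith)
    calc (PTheta N θ Tᶜ).toReal
        ≤ (PTheta N θ {x | (-lam) * t ≤ (-lam) * ∑ i, ∑ j, x i j}).toReal :=
          ENNReal.toReal_mono (measure_ne_top _ _) (measure_mono hsub)
      _ ≤ rexp (-((-lam) * t) + (-lam) * (∑ i, ∑ j, θ i j) + (N : ℝ)^2 * (-lam) ^ 2 / 2) :=
          key_bound N θ (-lam) ((-lam) * t)
      _ ≤ Real.exp (-(n : ℝ) ^ (2 * δ) / 8) := by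
          rw [Real.exp_le_exp, ← h2δ]
          have hb : (-lam) * (∑ i, ∑ j, θ i j) ≤ (-lam) * ((N : ℝ) * e) := by
            exact mul_le_mul_of_nonpos_left hmu (by linarith)
          have h4 : lam * t = e * e / 4 := by rw [hlam, ht']; field_simp; ring
          have h8 : (N:ℝ)^2 * lam^2 / 2 = e * e / 8 := by rw [hlam]; field_simp; ring
          have hlN : lam * ((N:ℝ) * e) = e * e / 2 := by rw [hlam]; field_simp
          have : -((-lam) * t) + (-lam) * ((N:ℝ) * e) + (N : ℝ)^2 * (-lam) ^ 2 / 2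
              = -(e * e) / 8 := by
            linear_combination h4 - hlN + h8
          linarith
  refine ⟨h1, Real.iSup_le h2 (Real.exp_nonneg _), ?_⟩
  unfold testRisk
  have := Real.iSup_le h2 (Real.exp_nonneg _)
  linarith

end
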